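/- Let M be an infinite Hermitian positive definite matrix and let (v_n)_{n≥0} be the orthonormal basis obtained by Gram–Schmidt from the canonical unit vectors: each v_n is supported on {0,…,n}, has v_n(n) real and positive, and B_M(v_n, v_m) = 1 if n = m and 0 otherwise, where B_M(v,w) = Σ_{i,j} v_i · M(i,j) · conj(w_j). Then: if Σ_{n=0}^∞ |v_n(0)|² < ∞ then γ(M) = 1 / Σ_{n=0}^∞ |v_n(0)|², and if Σ_{n=0}^∞ |v_n(0)|² = ∞ then γ(M) = 0. -/

import Mathlib

open Finset

/-- The sesquilinear form associated with an infinite matrix `M`: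
`B_M(v,w) = Σ_{i,j} v_i · M(i,j) · conj(w_j)` for finitely supported `v, w`. -/
noncomputable def BM (M : ℕ → ℕ → ℂ) (v w : ℕ →₀ ℂ) : ℂ :=
  ∑ i ∈ v.support, ∑ j ∈ w.support, v i * M i j * (starRingEnd ℂ) (w j)

/-- The quadratic form `Q_M(v) = B_M(v,v)` (its real part; for Hermitian `M` it is real). -/
noncomputable def QM (M : ℕ → ℕ → ℂ) (v : ℕ →₀ ℂ) : ℝ :=
  (BM M v v).re

/-- `M` is an (infinite) Hermitian matrix. -/
def IsHermitianMatrix (M : ℕ → ℕ → ℂ) : Prop :=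
  ∀ i j, M j i = (starRingEnd ℂ) (M i j)

/-- `M` is positive definite: `Q_M(v) > 0` for every nonzero finitely supported `v`. -/
def IsPosDef (M : ℕ → ℕ → ℂ) : Prop :=
  ∀ v : ℕ →₀ ℂ, v ≠ 0 → 0 < QM M v

/-- `γ(M) = inf { Q_M(v) : v finitely supported, v₀ = 1 }`. -/
noncomputable def gammaIdx (M : ℕ → ℕ → ℂ) : ℝ :=
  sInf {x | ∃ v : ℕ →₀ ℂ, v 0 = 1 ∧ QM M v = x}

lemma BM_eq (M : ℕ → ℕ → ℂ) (v w : ℕ →₀ ℂ) {s t : Finset ℕ}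
    (hs : v.support ⊆ s) (ht : w.support ⊆ t) :
    BM M v w = ∑ i ∈ s, ∑ j ∈ t, v i * M i j * (starRingEnd ℂ) (w j) := by
  unfold BM
  rw [Finset.sum_subset hs]
  · refine Finset.sum_congr rfl fun i _ => ?_
    refine Finset.sum_subset ht fun j _ hj => ?_
    simp [Finsupp.notMem_support_iff.mp hj]
  · intro i _ hi
    simp [Finsupp.notMem_support_iff.mp hi]

lemma BM_sum_left (M : ℕ → ℕ → ℂ) (u : ℕ → ℕ →₀ ℂ) (c : ℕ → ℂ) (F : Finset ℕ) (w : ℕ →₀ ℂ) :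
    BM M (∑ n ∈ F, c n • u n) w = ∑ n ∈ F, c n * BM M (u n) w := by
  classical
  set s := F.biUnion fun n => (u n).support with hsdef
  have hs : (∑ n ∈ F, c n • u n).support ⊆ s := by
    intro i hi
    obtain ⟨n, hn, hni⟩ := Finsupp.mem_support_finset_sum i hi
    exact Finset.mem_biUnion.mpr ⟨n, hn, Finsupp.support_smul hni⟩
  have happ : ∀ i, (∑ n ∈ F, c n • u n) i = ∑ n ∈ F, c n * u n i := by
    intro i; rw [Finsupp.finset_sum_apply]; rfl
  have step1 : ∀ i j, (∑ n ∈ F, c n • u n) i * M i j * (starRingEnd ℂ) (w j)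
      = ∑ n ∈ F, c n * (u n i * M i j * (starRingEnd ℂ) (w j)) := by
    intro i j; rw [happ, Finset.sum_mul, Finset.sum_mul]
    exact Finset.sum_congr rfl fun n _ => by ring
  rw [BM_eq M _ w hs (subset_refl _)]
  calc ∑ i ∈ s, ∑ j ∈ w.support, (∑ n ∈ F, c n • u n) i * M i j * (starRingEnd ℂ) (w j)
      = ∑ i ∈ s, ∑ n ∈ F, ∑ j ∈ w.support, c n * (u n i * M i j * (starRingEnd ℂ) (w j)) := by
        refine Finset.sum_congr rfl fun i _ => ?_
        have : ∑ j ∈ w.support, (∑ n ∈ F, c n • u n) i * M i j * (starRingEnd ℂ) (w j)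
            = ∑ j ∈ w.support, ∑ n ∈ F, c n * (u n i * M i j * (starRingEnd ℂ) (w j)) :=
          Finset.sum_congr rfl fun j _ => step1 i j
        rw [this, Finset.sum_comm]
    _ = ∑ n ∈ F, ∑ i ∈ s, ∑ j ∈ w.support, c n * (u n i * M i j * (starRingEnd ℂ) (w j)) :=
        Finset.sum_comm
    _ = ∑ n ∈ F, c n * BM M (u n) w := by
        refine Finset.sum_congr rfl fun n hn => ?_
        rw [BM_eq M (u n) w (Finset.subset_biUnion_of_mem (fun k => (u k).support) hn)
          (subset_refl _), Finset.mul_sum]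
        exact Finset.sum_congr rfl fun i _ => (Finset.mul_sum _ _ _).symm

lemma BM_sum_right (M : ℕ → ℕ → ℂ) (u : ℕ → ℕ →₀ ℂ) (c : ℕ → ℂ) (F : Finset ℕ) (w : ℕ →₀ ℂ) :
    BM M w (∑ n ∈ F, c n • u n) = ∑ n ∈ F, (starRingEnd ℂ) (c n) * BM M w (u n) := by
  classical
  set s := F.biUnion fun n => (u n).support with hsdef
  have hs : (∑ n ∈ F, c n • u n).support ⊆ s := by
    intro i hi
    obtain ⟨n, hn, hni⟩ := Finsupp.mem_support_finset_sum i hi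
    exact Finset.mem_biUnion.mpr ⟨n, hn, Finsupp.support_smul hni⟩
  have happ : ∀ j, (∑ n ∈ F, c n • u n) j = ∑ n ∈ F, c n * u n j := by
    intro j; rw [Finsupp.finset_sum_apply]; rfl
  have step1 : ∀ i j, w i * M i j * (starRingEnd ℂ) ((∑ n ∈ F, c n • u n) j)
      = ∑ n ∈ F, (starRingEnd ℂ) (c n) * (w i * M i j * (starRingEnd ℂ) (u n j)) := by
    intro i j; rw [happ, map_sum, Finset.mul_sum]
    exact Finset.sum_congr rfl fun n _ => by rw [map_mul]; ring
  rw [BM_eq M w _ (subset_refl _) hs]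
  calc ∑ i ∈ w.support, ∑ j ∈ s, w i * M i j * (starRingEnd ℂ) ((∑ n ∈ F, c n • u n) j)
      = ∑ i ∈ w.support, ∑ n ∈ F, ∑ j ∈ s, (starRingEnd ℂ) (c n) * (w i * M i j * (starRingEnd ℂ) (u n j)) := by
        refine Finset.sum_congr rfl fun i _ => ?_
        have : ∑ j ∈ s, w i * M i j * (starRingEnd ℂ) ((∑ n ∈ F, c n • u n) j)
            = ∑ j ∈ s, ∑ n ∈ F, (starRingEnd ℂ) (c n) * (w i * M i j * (starRingEnd ℂ) (u n j)) :=
          Finset.sum_congr rfl fun j _ => step1 i j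
        rw [this, Finset.sum_comm]
    _ = ∑ n ∈ F, ∑ i ∈ w.support, ∑ j ∈ s, (starRingEnd ℂ) (c n) * (w i * M i j * (starRingEnd ℂ) (u n j)) :=
        Finset.sum_comm
    _ = ∑ n ∈ F, (starRingEnd ℂ) (c n) * BM M w (u n) := by
        refine Finset.sum_congr rfl fun n hn => ?_
        rw [BM_eq M w (u n) (subset_refl _)
          (Finset.subset_biUnion_of_mem (fun k => (u k).support) hn), Finset.mul_sum]
        exact Finset.sum_congr rfl fun i _ => (Finset.mul_sum _ _ _).symm

lemma Iic_succ_eq (N : ℕ) : Finset.Iic (N+1) = insert (N+1) (Finset.Iic N) := by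
  ext k; simp; omega

lemma QM_expansion (M : ℕ → ℕ → ℂ) (v : ℕ → ℕ →₀ ℂ)
    (horth : ∀ n m, BM M (v n) (v m) = if n = m then 1 else 0)
    (c : ℕ → ℂ) (F : Finset ℕ) :
    QM M (∑ n ∈ F, c n • v n) = ∑ n ∈ F, ‖c n‖ ^ 2 := by
  classical
  have h1 : BM M (∑ n ∈ F, c n • v n) (∑ n ∈ F, c n • v n)
      = ∑ n ∈ F, ((Complex.normSq (c n) : ℝ) : ℂ) := by
    rw [BM_sum_left]
    refine Finset.sum_congr rfl fun n hn => ?_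
    rw [BM_sum_right]
    have : ∀ m ∈ F, (starRingEnd ℂ) (c m) * BM M (v n) (v m)
        = if m = n then (starRingEnd ℂ) (c m) else 0 := by
      intro m hm
      rw [horth]
      by_cases h : n = m <;> simp [h, eq_comm]
    rw [Finset.sum_congr rfl this, Finset.sum_ite_eq' F n (fun m => (starRingEnd ℂ) (c m)),
      if_pos hn, Complex.mul_conj]
  unfold QM
  rw [h1, ← Complex.ofReal_sum, Complex.ofReal_re]
  exact Finset.sum_congr rfl fun n _ => (Complex.sq_norm (c n)).symm

lemma apply_zero_expansion (v : ℕ → ℕ →₀ ℂ) (c : ℕ → ℂ) (F : Finset ℕ) :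
    (∑ n ∈ F, c n • v n) 0 = ∑ n ∈ F, c n * (v n) 0 := by
  rw [Finsupp.finset_sum_apply]; rfl

lemma repr_lemma (v : ℕ → ℕ →₀ ℂ) (hsupp : ∀ n, (v n).support ⊆ Finset.Iic n)
    (hne : ∀ n, (v n) n ≠ 0) :
    ∀ N (w : ℕ →₀ ℂ), w.support ⊆ Finset.Iic N →
      ∃ c : ℕ → ℂ, w = ∑ n ∈ Finset.Iic N, c n • v n := by
  intro N
  induction N with
  | zero =>
    intro w hw
    refine ⟨fun _ => w 0 / v 0 0, ?_⟩
    have h0 : Finset.Iic 0 = {0} := rfl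
    rw [h0, Finset.sum_singleton]
    ext k
    rcases Nat.eq_zero_or_pos k with hk | hk
    · subst hk
      rw [Finsupp.smul_apply, smul_eq_mul, div_mul_cancel₀ _ (hne 0)]
    · have hk' : k ∉ Finset.Iic 0 := by simp; omega
      have h1 : w k = 0 := Finsupp.notMem_support_iff.mp (fun h => hk' (hw h))
      have h2 : v 0 k = 0 := Finsupp.notMem_support_iff.mp (fun h => hk' (hsupp 0 h))
      simp [h1, h2]
  | succ N ih =>
    intro w hw
    set a := w (N+1) / v (N+1) (N+1) with ha
    have hsub : (w - a • v (N+1)).support ⊆ Finset.Iic N := by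
      intro k hk
      have hval : (w - a • v (N+1)) k ≠ 0 := Finsupp.mem_support_iff.mp hk
      have hle : k ≤ N + 1 := by
        by_contra h
        push_neg at h
        have hk' : k ∉ Finset.Iic (N+1) := by simp; omega
        have h1 : w k = 0 := Finsupp.notMem_support_iff.mp (fun hh => hk' (hw hh))
        have h2 : v (N+1) k = 0 :=
          Finsupp.notMem_support_iff.mp (fun hh => hk' (hsupp (N+1) hh))
        exact hval (by simp [Finsupp.sub_apply, Finsupp.smul_apply, h1, h2])
      have hne' : k ≠ N + 1 := by
        intro hkk
        subst hkk
        apply hval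
        simp only [Finsupp.sub_apply, Finsupp.smul_apply, smul_eq_mul, ha]
        rw [div_mul_cancel₀ _ (hne (N+1)), sub_self]
      exact Finset.mem_Iic.mpr (by omega)
    obtain ⟨c, hc⟩ := ih _ hsub
    refine ⟨Function.update c (N+1) a, ?_⟩
    rw [Iic_succ_eq, Finset.sum_insert (by simp)]
    have hcc : ∑ n ∈ Finset.Iic N, Function.update c (N+1) a n • v n
        = ∑ n ∈ Finset.Iic N, c n • v n := by
      refine Finset.sum_congr rfl fun n hn => ?_
      rw [Function.update_of_ne (by simp at hn; omega)]
    rw [hcc, Function.update_self, ← hc]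
    abel

open Filter Topology

/-- let `M` be Hermitian positive definite and `(v_n)` the Gram–Schmidt
orthonormal basis with respect to `B_M` (each `v_n` supported on `{0,…,n}` with positive
real leading entry `v_n(n)`).  If `Σ |v_n(0)|² < ∞` then `γ(M) = 1 / Σ |v_n(0)|²`, and
if `Σ |v_n(0)|² = ∞` then `γ(M) = 0`. -/
theorem gamma_eq_inv_sum_sq (M : ℕ → ℕ → ℂ)
    (hHerm : IsHermitianMatrix M) (hPD : IsPosDef M)
    (v : ℕ → (ℕ →₀ ℂ))
    (hsupp : ∀ n, (v n).support ⊆ Finset.Iic n)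
    (hlead : ∀ n, ((v n) n).im = 0 ∧ 0 < ((v n) n).re)
    (horth : ∀ n m, BM M (v n) (v m) = if n = m then 1 else 0) :
    (Summable (fun n => ‖(v n) 0‖ ^ 2) →
      gammaIdx M = 1 / ∑' n, ‖(v n) 0‖ ^ 2) ∧
    (¬ Summable (fun n => ‖(v n) 0‖ ^ 2) → gammaIdx M = 0) := by
  classical
  set f : ℕ → ℝ := fun n => ‖(v n) 0‖ ^ 2 with hf
  have hfnonneg : ∀ n, 0 ≤ f n := fun n => sq_nonneg _
  have hne : ∀ n, (v n) n ≠ 0 := by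
    intro n h
    have h2 := (hlead n).2
    rw [h] at h2
    simp at h2
  set S : ℕ → ℝ := fun N => ∑ n ∈ Finset.Iic N, f n with hSdef
  have hSpos : ∀ N, 0 < S N := by
    intro N
    refine Finset.sum_pos' (fun n _ => hfnonneg n) ⟨0, Finset.mem_Iic.mpr (Nat.zero_le N), ?_⟩
    exact pow_pos (norm_pos_iff.mpr (hne 0)) 2
  set wmin : ℕ → (ℕ →₀ ℂ) :=
    fun N => ∑ n ∈ Finset.Iic N, ((starRingEnd ℂ) ((v n) 0) / (S N : ℂ)) • v n with hwdef
  have hw0 : ∀ N, (wmin N) 0 = 1 := by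
    intro N
    rw [hwdef, apply_zero_expansion]
    have h1 : ∀ n ∈ Finset.Iic N,
        (starRingEnd ℂ) ((v n) 0) / (S N : ℂ) * ((v n) 0) = ((f n : ℝ) : ℂ) / (S N : ℂ) := by
      intro n _
      have hns : ((f n : ℝ) : ℂ) = ((Complex.normSq ((v n) 0) : ℝ) : ℂ) := by
        norm_cast
        exact Complex.sq_norm _
      rw [div_mul_eq_mul_div, mul_comm, Complex.mul_conj, hns]
    rw [Finset.sum_congr rfl h1, ← Finset.sum_div, ← Complex.ofReal_sum]
    rw [div_self]
    exact_mod_cast (hSpos N).ne'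
  have hQmin : ∀ N, QM M (wmin N) = 1 / S N := by
    intro N
    rw [hwdef, QM_expansion M v horth]
    have h1 : ∀ n ∈ Finset.Iic N,
        ‖(starRingEnd ℂ) ((v n) 0) / (S N : ℂ)‖ ^ 2 = f n / (S N) ^ 2 := by
      intro n _
      rw [norm_div, Complex.norm_conj, Complex.norm_real, Real.norm_eq_abs, abs_of_pos (hSpos N), div_pow]
    rw [Finset.sum_congr rfl h1, ← Finset.sum_div]
    have h2 : (∑ n ∈ Finset.Iic N, f n) = S N := rfl
    rw [h2, sq, ← div_div, div_self (hSpos N).ne']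
  set G : Set ℝ := {x | ∃ w : ℕ →₀ ℂ, w 0 = 1 ∧ QM M w = x} with hGdef
  have hgamma : gammaIdx M = sInf G := rfl
  have hmem : ∀ N, 1 / S N ∈ G := fun N => ⟨wmin N, hw0 N, hQmin N⟩
  have hlb : ∀ x ∈ G, 0 ≤ x ∧ ∃ N, 1 ≤ x * S N := by
    rintro x ⟨w, hw1, hwQ⟩
    set N := w.support.sup id with hNdef
    have hws : w.support ⊆ Finset.Iic N :=
      fun i hi => Finset.mem_Iic.mpr (Finset.le_sup (f := id) hi)
    obtain ⟨c, hc⟩ := repr_lemma v hsupp hne N w hws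
    have hxQ : x = ∑ n ∈ Finset.Iic N, ‖c n‖ ^ 2 := by
      rw [← hwQ, hc, QM_expansion M v horth]
    have h0 : (1:ℝ) ≤ ∑ n ∈ Finset.Iic N, ‖c n‖ * ‖(v n) 0‖ := by
      have e1 : (1:ℝ) = ‖w 0‖ := by rw [hw1]; simp
      rw [e1, hc, apply_zero_expansion]
      refine le_trans (norm_sum_le _ _) ?_
      exact le_of_eq (Finset.sum_congr rfl fun n _ => norm_mul _ _)
    have hCS := Finset.sum_mul_sq_le_sq_mul_sq (Finset.Iic N)
      (fun n => ‖c n‖) (fun n => ‖(v n) 0‖)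
    constructor
    · rw [hxQ]; positivity
    · refine ⟨N, ?_⟩
      have hx : x * S N = (∑ n ∈ Finset.Iic N, ‖c n‖ ^ 2) *
          (∑ n ∈ Finset.Iic N, ‖(v n) 0‖ ^ 2) := by rw [hxQ]
      rw [hx]
      nlinarith [h0, hCS]
  have hbdd : BddBelow G := ⟨0, fun x hx => (hlb x hx).1⟩
  have hnonempty : G.Nonempty := ⟨_, hmem 0⟩
  have hSr : ∀ N, S N = ∑ n ∈ Finset.range (N+1), f n := by
    intro N
    rw [hSdef]
    refine Finset.sum_congr ?_ fun _ _ => rfl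
    ext k; simp [Nat.lt_succ_iff]
  constructor
  · intro hsum
    set T := ∑' n, f n with hTdef
    have hTpos : 0 < T := hsum.tsum_pos hfnonneg 0 (pow_pos (norm_pos_iff.mpr (hne 0)) 2)
    have hSleT : ∀ N, S N ≤ T := by
      intro N
      rw [hSdef]
      exact hsum.sum_le_tsum _ (fun n _ => hfnonneg n)
    have hlow : ∀ x ∈ G, 1 / T ≤ x := by
      intro x hx
      obtain ⟨hx0, N, hx1⟩ := hlb x hx
      rw [div_le_iff₀ hTpos]
      calc (1:ℝ) ≤ x * S N := hx1
        _ ≤ x * T := mul_le_mul_of_nonneg_left (hSleT N) hx0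
    have hStend : Tendsto S atTop (𝓝 T) := by
      have h1 := hsum.hasSum.tendsto_sum_nat
      have h2 := h1.comp (tendsto_add_atTop_nat 1)
      convert h2 using 1
      funext N
      exact hSr N
    have htend : Tendsto (fun N => 1 / S N) atTop (𝓝 (1 / T)) :=
      tendsto_const_nhds.div hStend hTpos.ne'
    rw [hgamma]
    exact le_antisymm (ge_of_tendsto' htend fun N => csInf_le hbdd (hmem N))
      (le_csInf hnonempty hlow)
  · intro hnsum
    have hdiv : Tendsto (fun n => ∑ i ∈ Finset.range n, f i) atTop atTop :=
      (not_summable_iff_tendsto_nat_atTop_of_nonneg hfnonneg).mp hnsum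
    have hSdiv : Tendsto S atTop atTop := by
      have h2 := hdiv.comp (tendsto_add_atTop_nat 1)
      convert h2 using 1
      funext N
      exact hSr N
    have htend : Tendsto (fun N => 1 / S N) atTop (𝓝 0) := by
      simpa [one_div, Function.comp_def] using tendsto_inv_atTop_zero.comp hSdiv
    rw [hgamma]
    exact le_antisymm (ge_of_tendsto' htend fun N => csInf_le hbdd (hmem N))
      (le_csInf hnonempty fun x hx => (hlb x hx).1)
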